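/- Suppose S is a real-valued scoring rule for binary outcomes such that Av_S(a,b,c,d) = Youden(a,b,c,d) for every quadruple of natural numbers (a,b,c,d) with a + c ≠ 0 and b + d ≠ 0. Then for all natural numbers c ≥ 1 and d ≥ 1 one has S(c/(c+d), 0) = −(d/c)·S(c/(c+d), 1). -/

import Mathlib

/-- The Youden index of a 2×2 contingency table `(a,b,c,d)` (real arithmetic,
with the convention `x/0 = 0`). -/
noncomputable def Youden (a b c d : ℕ) : ℝ :=
  (a : ℝ) / ((a : ℝ) + (c : ℝ)) + (d : ℝ) / ((b : ℝ) + (d : ℝ)) - 1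

/-- The average score of the scoring rule `S : ℝ → Fin 2 → ℝ` on the table
`(a,b,c,d)`, with predicted probabilities `p₁ = a/(a+b)` and `p₀ = c/(c+d)`
(convention `0/0 = 0`). -/
noncomputable def Av (S : ℝ → Fin 2 → ℝ) (a b c d : ℕ) : ℝ :=
  (1 / ((a : ℝ) + b + c + d)) *
    ((a : ℝ) * S ((a : ℝ) / ((a : ℝ) + (b : ℝ))) 1
      + (b : ℝ) * S ((a : ℝ) / ((a : ℝ) + (b : ℝ))) 0
      + (c : ℝ) * S ((c : ℝ) / ((c : ℝ) + (d : ℝ))) 0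
      + (d : ℝ) * S ((c : ℝ) / ((c : ℝ) + (d : ℝ))) 1)

/-- If the average score of `S` equals the Youden index on all admissible tables,
then `S(c/(c+d), 0) = -(d/c)·S(c/(c+d), 1)` for all `c, d ≥ 1`. -/
theorem scoring_rule_average_case_a_b_zero (S : ℝ → Fin 2 → ℝ)
    (hS : ∀ a b c d : ℕ, a + c ≠ 0 → b + d ≠ 0 → Av S a b c d = Youden a b c d)
    (c d : ℕ) (hc : 1 ≤ c) (hd : 1 ≤ d) :
    S ((c : ℝ) / ((c : ℝ) + (d : ℝ))) 0
      = -((d : ℝ) / (c : ℝ)) * S ((c : ℝ) / ((c : ℝ) + (d : ℝ))) 1 := by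
  have h := hS 0 0 c d (by omega) (by omega)
  have hc' : (0:ℝ) < (c:ℝ) := by exact_mod_cast hc
  have hd' : (0:ℝ) < (d:ℝ) := by exact_mod_cast hd
  have hcd : (c:ℝ) + (d:ℝ) ≠ 0 := by positivity
  simp only [Av, Youden, Nat.cast_zero] at h
  field_simp at h
  field_simp
  have h2 : ((c:ℝ) * S ((c:ℝ) / ((c:ℝ) + (d:ℝ))) 0 + (d:ℝ) * S ((c:ℝ) / ((c:ℝ) + (d:ℝ))) 1)
      * ((c:ℝ) * (d:ℝ)) = 0 := by linear_combination h
  have hpos : (c:ℝ) * (d:ℝ) ≠ 0 := by positivity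
  have h3 := (mul_eq_zero.mp h2).resolve_right hpos
  linarith
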